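/- If A⇒B ≡ C⇒τ, then either (A ≡ C and B ≡ τ), or there exists B' such that C ≡ A∧B' and B ≡ B'⇒τ. -/

import Mathlib

/-- Types: A ::= τ | A ⇒ A | A ∧ A -/
inductive Ty : Type
  | tau : Ty
  | imp : Ty → Ty → Ty
  | conj : Ty → Ty → Ty
  deriving DecidableEq

/-- Type equivalence ≡: smallest congruence with the four isomorphisms. -/
inductive TyEq : Ty → Ty → Prop
  | refl (A) : TyEq A A
  | symm {A B} : TyEq A B → TyEq B A
  | trans {A B C} : TyEq A B → TyEq B C → TyEq A C
  | impCongr {A A' B B'} : TyEq A A' → TyEq B B' → TyEq (.imp A B) (.imp A' B')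
  | conjCongr {A A' B B'} : TyEq A A' → TyEq B B' → TyEq (.conj A B) (.conj A' B')
  | comm (A B) : TyEq (.conj A B) (.conj B A)
  | assoc (A B C) : TyEq (.conj A (.conj B C)) (.conj (.conj A B) C)
  | dist (A B C) : TyEq (.imp A (.conj B C)) (.conj (.imp A B) (.imp A C))
  | curry (A B C) : TyEq (.imp (.conj A B) C) (.imp A (.imp B C))

/-- Add premise `a` to a prime factor: τ becomes a⇒τ (convention a∧∅ = a),
    c⇒τ becomes (a∧c)⇒τ. -/
def addPrem (a : Ty) : Ty → Ty
  | .tau => .imp a .tau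
  | .imp c .tau => .imp (.conj a c) .tau
  | t => t

/-- Multiset of prime factors. -/
def PF : Ty → Multiset Ty
  | .tau => {.tau}
  | .imp a b => (PF b).map (addPrem a)
  | .conj a b => PF a + PF b

namespace ImpImpAux

scoped infixl:50 " ≋ " => TyEq
scoped infixl:50 " ~p " => List.Perm

instance : Trans TyEq TyEq TyEq := ⟨TyEq.trans⟩

/-- An injective encoding of types into ℕ. -/
def enc : Ty → ℕ
  | .tau => 0
  | .imp a b => 2 * Nat.pair (enc a) (enc b) + 1
  | .conj a b => 2 * Nat.pair (enc a) (enc b) + 2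

theorem enc_inj : ∀ (a b : Ty), enc a = enc b → a = b := by
  intro a
  induction a with
  | tau =>
    intro b h
    cases b with
    | tau => rfl
    | imp u v => simp only [enc] at h; omega
    | conj u v => simp only [enc] at h; omega
  | imp x y ihx ihy =>
    intro b h
    cases b with
    | tau => simp only [enc] at h; omega
    | imp u v =>
      simp only [enc] at h
      have hp : Nat.pair (enc x) (enc y) = Nat.pair (enc u) (enc v) := by omega
      rw [Nat.pair_eq_pair] at hp
      rw [ihx u hp.1, ihy v hp.2]
    | conj u v => simp only [enc] at h; omega
  | conj x y ihx ihy =>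
    intro b h
    cases b with
    | tau => simp only [enc] at h; omega
    | imp u v => simp only [enc] at h; omega
    | conj u v =>
      simp only [enc] at h
      have hp : Nat.pair (enc x) (enc y) = Nat.pair (enc u) (enc v) := by omega
      rw [Nat.pair_eq_pair] at hp
      rw [ihx u hp.1, ihy v hp.2]

/-- Sort a list of types by their encoding, canonically. -/
def sortT (l : List Ty) : List Ty := l.mergeSort (fun a b => enc a ≤ enc b)

theorem sortT_perm (l : List Ty) : sortT l ~p l := List.mergeSort_perm l _

theorem sortT_sorted (l : List Ty) :
    List.Pairwise (fun a b : Ty => enc a ≤ enc b) (sortT l) := by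
  have h := List.pairwise_mergeSort (le := fun a b : Ty => decide (enc a ≤ enc b))
    (fun a b c hab hbc => by
      simp only [decide_eq_true_eq] at *; omega)
    (fun a b => by
      simp only [Bool.or_eq_true, decide_eq_true_eq]; omega) l
  exact List.Pairwise.imp (fun hab => of_decide_eq_true hab) h

instance : IsAntisymm Ty (fun a b : Ty => enc a ≤ enc b) :=
  ⟨fun a b h1 h2 => enc_inj _ _ (Nat.le_antisymm h1 h2)⟩

theorem sortT_congr {l m : List Ty} (h : l ~p m) : sortT l = sortT m :=
  List.Perm.eq_of_pairwise' (sortT_sorted l) (sortT_sorted m)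
    ((sortT_perm l).trans (h.trans (sortT_perm m).symm))

theorem sortT_ne_nil {l : List Ty} (h : l ≠ []) : sortT l ≠ [] := by
  intro hc
  have := sortT_perm l
  rw [hc] at this
  exact h this.symm.eq_nil

/-- Conjunction of a nonempty list (τ for the empty list, never used). -/
def clist : List Ty → Ty
  | [] => .tau
  | [a] => a
  | a :: l => .conj a (clist l)

theorem clist_cons₂ (a b : Ty) (l : List Ty) :
    clist (a :: b :: l) = .conj a (clist (b :: l)) := rfl

theorem clist_cons_ne (a : Ty) {l : List Ty} (h : l ≠ []) :
    clist (a :: l) = .conj a (clist l) := by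
  cases l with
  | nil => exact absurd rfl h
  | cons b m => rfl

theorem clist_append {l m : List Ty} (hl : l ≠ []) (hm : m ≠ []) :
    clist (l ++ m) ≋ .conj (clist l) (clist m) := by
  induction l with
  | nil => exact absurd rfl hl
  | cons a l ih =>
    cases l with
    | nil =>
      rw [List.singleton_append, clist_cons_ne a hm]
      exact TyEq.refl _
    | cons b t =>
      rw [List.cons_append, clist_cons_ne a (by simp), clist_cons₂]
      calc Ty.conj a (clist (b :: t ++ m))
            ≋ Ty.conj a (.conj (clist (b :: t)) (clist m)) :=
          TyEq.conjCongr (TyEq.refl _) (ih (by simp))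
        _ ≋ .conj (.conj a (clist (b :: t))) (clist m) := TyEq.assoc _ _ _

theorem clist_perm : ∀ {l m : List Ty}, l ~p m → clist l ≋ clist m := by
  intro l m h
  induction h with
  | nil => exact TyEq.refl _
  | @cons a l₁ l₂ h ih =>
    cases l₁ with
    | nil =>
      have : l₂ = [] := h.symm.eq_nil
      subst this; exact TyEq.refl _
    | cons b t =>
      have hm : l₂ ≠ [] := by
        intro hc; rw [hc] at h; exact List.cons_ne_nil b t h.eq_nil
      rw [clist_cons_ne a (by simp), clist_cons_ne a hm]
      exact TyEq.conjCongr (TyEq.refl _) ih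
  | swap a b l' =>
    cases l' with
    | nil => exact TyEq.comm b a
    | cons c t =>
      rw [clist_cons₂, clist_cons_ne a (by simp), clist_cons₂, clist_cons_ne b (by simp)]
      calc Ty.conj b (.conj a (clist (c :: t)))
            ≋ .conj (.conj b a) (clist (c :: t)) := TyEq.assoc _ _ _
        _ ≋ .conj (.conj a b) (clist (c :: t)) :=
          TyEq.conjCongr (TyEq.comm b a) (TyEq.refl _)
        _ ≋ .conj a (.conj b (clist (c :: t))) := (TyEq.assoc _ _ _).symm
  | trans _ _ ih1 ih2 => exact ih1.trans ih2

/-- Split a right-nested conjunction into its list of conjuncts. -/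
def splitConj : Ty → List Ty
  | .conj a b => a :: splitConj b
  | t => [t]

theorem splitConj_ne_nil (t : Ty) : splitConj t ≠ [] := by
  cases t <;> simp [splitConj]

theorem clist_splitConj : ∀ t : Ty, clist (splitConj t) = t := by
  intro t
  induction t with
  | tau => rfl
  | imp a b _ _ => rfl
  | conj a b _ ihb =>
    show clist (a :: splitConj b) = _
    rw [clist_cons_ne a (splitConj_ne_nil b), ihb]

def notC (t : Ty) : Prop := ∀ a b, t ≠ .conj a b

def prems : Ty → List Ty
  | .imp x .tau => splitConj x
  | _ => []

theorem prems_tau : prems .tau = [] := rfl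
theorem prems_imp_tau (x : Ty) : prems (.imp x .tau) = splitConj x := rfl

def mkP : List Ty → Ty
  | [] => .tau
  | l => .imp (clist l) .tau

theorem mkP_nil : mkP [] = .tau := rfl
theorem mkP_cons (a : Ty) (l : List Ty) : mkP (a :: l) = .imp (clist (a :: l)) .tau := rfl

theorem splitConj_clist {l : List Ty} (hl : l ≠ []) (h : ∀ x ∈ l, notC x) :
    splitConj (clist l) = l := by
  induction l with
  | nil => exact absurd rfl hl
  | cons a l ih =>
    cases l with
    | nil =>
      have ha := h a (by simp)
      cases a with
      | conj x y => exact absurd rfl (ha x y)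
      | tau => rfl
      | imp x y => rfl
    | cons b t =>
      rw [clist_cons₂]
      show a :: splitConj (clist (b :: t)) = _
      rw [ih (by simp) (fun x hx => h x (by simp [hx]))]

theorem prems_mkP {l : List Ty} (h : ∀ x ∈ l, notC x) : prems (mkP l) = l := by
  cases l with
  | nil => rfl
  | cons a t =>
    rw [mkP_cons, prems_imp_tau, splitConj_clist (by simp) h]

theorem mkP_inj {l m : List Ty} (hl : ∀ x ∈ l, notC x) (hm : ∀ x ∈ m, notC x)
    (h : mkP l = mkP m) : l = m := by
  rw [← prems_mkP hl, ← prems_mkP hm, h]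

/-- A good prime: τ or X⇒τ, whose premises are non-conjunctions. -/
def Good (p : Ty) : Prop :=
  (p = .tau ∨ ∃ x, p = .imp x .tau) ∧ ∀ q ∈ prems p, notC q

theorem Good.notC {p : Ty} (h : Good p) : notC p := by
  rcases h.1 with rfl | ⟨x, rfl⟩ <;> intro a b hc <;> simp at hc

/-- Canonical normal form: a sorted list of good primes. -/
def nf : Ty → List Ty
  | .tau => [.tau]
  | .imp a b => sortT ((nf b).map (fun p => mkP (sortT (nf a ++ prems p))))
  | .conj a b => sortT (nf a ++ nf b)

theorem nf_ne_nil : ∀ t : Ty, nf t ≠ [] := by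
  intro t
  induction t with
  | tau => simp [nf]
  | imp a b _ ihb =>
    exact sortT_ne_nil (by simpa using ihb)
  | conj a b iha _ =>
    exact sortT_ne_nil (by simp [iha])

theorem nf_good : ∀ (t : Ty), ∀ p ∈ nf t, Good p := by
  intro t
  induction t with
  | tau =>
    intro p hp
    simp [nf] at hp
    subst hp
    exact ⟨Or.inl rfl, by simp [prems_tau]⟩
  | imp a b iha ihb =>
    intro p hp
    have hp' := (sortT_perm _).subset hp
    rw [List.mem_map] at hp'
    obtain ⟨q, hq, rfl⟩ := hp'
    set l := sortT (nf a ++ prems q) with hl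
    have hlC : ∀ x ∈ l, notC x := by
      intro x hx
      have hx' := (sortT_perm _).subset hx
      rcases List.mem_append.mp hx' with h1 | h2
      · exact (iha x h1).notC
      · exact (ihb q hq).2 x h2
    constructor
    · cases hc : l with
      | nil => exact Or.inl rfl
      | cons c t => exact Or.inr ⟨_, mkP_cons c t⟩
    · rw [prems_mkP hlC]; exact hlC
  | conj a b iha ihb =>
    intro p hp
    have hp' := (sortT_perm _).subset hp
    rcases List.mem_append.mp hp' with h1 | h2
    · exact iha p h1
    · exact ihb p h2

theorem nf_sound {A B : Ty} (h : A ≋ B) : nf A = nf B := by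
  induction h with
  | refl => rfl
  | symm _ ih => exact ih.symm
  | trans _ _ ih1 ih2 => exact ih1.trans ih2
  | impCongr _ _ ih1 ih2 => simp only [nf, ih1, ih2]
  | conjCongr _ _ ih1 ih2 => simp only [nf, ih1, ih2]
  | comm a b => exact sortT_congr List.perm_append_comm
  | assoc a b c =>
    simp only [nf]
    apply sortT_congr
    calc nf a ++ sortT (nf b ++ nf c)
          ~p nf a ++ (nf b ++ nf c) := List.Perm.append_left _ (sortT_perm _)
      _ = (nf a ++ nf b) ++ nf c := (List.append_assoc _ _ _).symm
      _ ~p sortT (nf a ++ nf b) ++ nf c :=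
        (List.Perm.append_right _ (sortT_perm _)).symm
  | dist a b c =>
    simp only [nf]
    apply sortT_congr
    calc (sortT (nf b ++ nf c)).map (fun p => mkP (sortT (nf a ++ prems p)))
          ~p (nf b ++ nf c).map (fun p => mkP (sortT (nf a ++ prems p))) :=
        (sortT_perm _).map _
      _ = (nf b).map (fun p => mkP (sortT (nf a ++ prems p)))
            ++ (nf c).map (fun p => mkP (sortT (nf a ++ prems p))) :=
        List.map_append
      _ ~p sortT ((nf b).map (fun p => mkP (sortT (nf a ++ prems p))))
            ++ sortT ((nf c).map (fun p => mkP (sortT (nf a ++ prems p)))) :=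
        ((sortT_perm _).append (sortT_perm _)).symm
  | curry a b c =>
    simp only [nf]
    apply sortT_congr
    have key : ∀ p ∈ nf c,
        mkP (sortT (sortT (nf a ++ nf b) ++ prems p)) =
          mkP (sortT (nf a ++ prems (mkP (sortT (nf b ++ prems p))))) := by
      intro p hp
      have hprem : prems (mkP (sortT (nf b ++ prems p))) = sortT (nf b ++ prems p) := by
        apply prems_mkP
        intro x hx
        rcases List.mem_append.mp ((sortT_perm _).subset hx) with h1 | h2
        · exact (nf_good b x h1).notC
        · exact (nf_good c p hp).2 x h2
      rw [hprem]
      congr 1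
      apply sortT_congr
      calc sortT (nf a ++ nf b) ++ prems p
            ~p (nf a ++ nf b) ++ prems p := List.Perm.append_right _ (sortT_perm _)
        _ = nf a ++ (nf b ++ prems p) := List.append_assoc _ _ _
        _ ~p nf a ++ sortT (nf b ++ prems p) :=
          List.Perm.append_left _ (sortT_perm _).symm
    calc (nf c).map (fun p => mkP (sortT (sortT (nf a ++ nf b) ++ prems p)))
          = (nf c).map (fun p =>
              mkP (sortT (nf a ++ prems (mkP (sortT (nf b ++ prems p)))))) :=
        List.map_congr_left key
      _ = ((nf c).map (fun p => mkP (sortT (nf b ++ prems p)))).map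
            (fun p => mkP (sortT (nf a ++ prems p))) := by
        rw [List.map_map]; rfl
      _ ~p (sortT ((nf c).map (fun p => mkP (sortT (nf b ++ prems p))))).map
            (fun p => mkP (sortT (nf a ++ prems p))) :=
        ((sortT_perm _).map _).symm

theorem imp_prime (a p : Ty) (iha : a ≋ clist (nf a)) (hp : Good p) :
    Ty.imp a p ≋ mkP (sortT (nf a ++ prems p)) := by
  rcases hp.1 with rfl | ⟨x, rfl⟩
  · rw [prems_tau, List.append_nil]
    have hne : sortT (nf a) ≠ [] := sortT_ne_nil (nf_ne_nil a)
    obtain ⟨c, t, hct⟩ := List.exists_cons_of_ne_nil hne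
    rw [hct, mkP_cons, ← hct]
    exact TyEq.impCongr (iha.trans (clist_perm (sortT_perm (nf a)).symm)) (TyEq.refl _)
  · rw [prems_imp_tau]
    have hne : sortT (nf a ++ splitConj x) ≠ [] :=
      sortT_ne_nil (by simp [nf_ne_nil a])
    obtain ⟨c, t, hct⟩ := List.exists_cons_of_ne_nil hne
    rw [hct, mkP_cons, ← hct]
    calc Ty.imp a (.imp x .tau)
          ≋ .imp (.conj a x) .tau := (TyEq.curry a x .tau).symm
      _ ≋ .imp (.conj (clist (nf a)) (clist (splitConj x))) .tau := by
        rw [clist_splitConj]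
        exact TyEq.impCongr (TyEq.conjCongr iha (TyEq.refl _)) (TyEq.refl _)
      _ ≋ .imp (clist (nf a ++ splitConj x)) .tau :=
        TyEq.impCongr (clist_append (nf_ne_nil a) (splitConj_ne_nil x)).symm (TyEq.refl _)
      _ ≋ .imp (clist (sortT (nf a ++ splitConj x))) .tau :=
        TyEq.impCongr (clist_perm (sortT_perm _).symm) (TyEq.refl _)

theorem imp_list (a : Ty) (iha : a ≋ clist (nf a)) :
    ∀ l : List Ty, l ≠ [] → (∀ p ∈ l, Good p) →
      Ty.imp a (clist l) ≋ clist (l.map (fun p => mkP (sortT (nf a ++ prems p)))) := by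
  intro l
  induction l with
  | nil => intro h; exact absurd rfl h
  | cons p l ih =>
    intro _ hg
    cases l with
    | nil =>
      exact imp_prime a p iha (hg p (by simp))
    | cons q t =>
      calc Ty.imp a (clist (p :: q :: t))
            = .imp a (.conj p (clist (q :: t))) := by rw [clist_cons₂]
        _ ≋ .conj (.imp a p) (.imp a (clist (q :: t))) := TyEq.dist _ _ _
        _ ≋ .conj (mkP (sortT (nf a ++ prems p)))
              (clist ((q :: t).map (fun p => mkP (sortT (nf a ++ prems p))))) :=
          TyEq.conjCongr (imp_prime a p iha (hg p (by simp)))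
            (ih (by simp) (fun x hx => hg x (by simp [hx])))
        _ = clist ((p :: q :: t).map (fun p => mkP (sortT (nf a ++ prems p)))) := by
          simp only [List.map_cons, clist_cons₂]

theorem nf_complete : ∀ t : Ty, t ≋ clist (nf t) := by
  intro t
  induction t with
  | tau => exact TyEq.refl _
  | imp a b iha ihb =>
    calc Ty.imp a b
          ≋ .imp a (clist (nf b)) := TyEq.impCongr (TyEq.refl _) ihb
      _ ≋ clist ((nf b).map (fun p => mkP (sortT (nf a ++ prems p)))) :=
        imp_list a iha (nf b) (nf_ne_nil b) (nf_good b)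
      _ ≋ clist (sortT ((nf b).map (fun p => mkP (sortT (nf a ++ prems p))))) :=
        clist_perm (sortT_perm _).symm
  | conj a b iha ihb =>
    calc Ty.conj a b
          ≋ .conj (clist (nf a)) (clist (nf b)) := TyEq.conjCongr iha ihb
      _ ≋ clist (nf a ++ nf b) := (clist_append (nf_ne_nil a) (nf_ne_nil b)).symm
      _ ≋ clist (sortT (nf a ++ nf b)) := clist_perm (sortT_perm _).symm

end ImpImpAux

open ImpImpAux in
/-- Lemma 6 (imp vs prime imp). -/
theorem imp_imp (A B C : Ty) (h : TyEq (.imp A B) (.imp C .tau)) :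
    (TyEq A C ∧ TyEq B .tau) ∨
    (∃ B' : Ty, TyEq C (.conj A B') ∧ TyEq B (.imp B' .tau)) := by
  have hnf := nf_sound h
  have hC : nf (Ty.imp C .tau) = [mkP (sortT (nf C))] := by
    simp only [nf, List.map_cons, List.map_nil, prems_tau, List.append_nil]
    exact List.perm_singleton.mp (sortT_perm _)
  rw [hC] at hnf
  have hmap : (nf B).map (fun p => mkP (sortT (nf A ++ prems p)))
      = [mkP (sortT (nf C))] := by
    apply List.perm_singleton.mp
    rw [← hnf]
    exact (sortT_perm _).symm
  obtain ⟨p, hBp, hq⟩ : ∃ p, nf B = [p] ∧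
      mkP (sortT (nf A ++ prems p)) = mkP (sortT (nf C)) := by
    cases hBl : nf B with
    | nil => exact absurd hBl (nf_ne_nil B)
    | cons p t =>
      rw [hBl, List.map_cons] at hmap
      have h1 := (List.cons.injEq _ _ _ _).mp hmap
      have ht : t = [] := List.map_eq_nil_iff.mp h1.2
      exact ⟨p, by rw [ht], h1.1⟩
  have hpGood : Good p := nf_good B p (by rw [hBp]; simp)
  have hB : TyEq B p := by
    have := nf_complete B
    rwa [hBp] at this
  have hlist : sortT (nf A ++ prems p) = sortT (nf C) := by
    apply mkP_inj _ _ hq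
    · intro x hx
      rcases List.mem_append.mp ((sortT_perm _).subset hx) with h1 | h2
      · exact (nf_good A x h1).notC
      · exact hpGood.2 x h2
    · intro x hx
      exact (nf_good C x ((sortT_perm _).subset hx)).notC
  rcases hpGood.1 with rfl | ⟨x, rfl⟩
  · left
    refine ⟨?_, hB⟩
    rw [prems_tau, List.append_nil] at hlist
    calc A ≋ clist (nf A) := nf_complete A
      _ ≋ clist (sortT (nf A)) := clist_perm (sortT_perm _).symm
      _ = clist (sortT (nf C)) := by rw [hlist]
      _ ≋ clist (nf C) := clist_perm (sortT_perm _)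
      _ ≋ C := (nf_complete C).symm
  · right
    refine ⟨x, ?_, hB⟩
    rw [prems_imp_tau] at hlist
    calc C ≋ clist (nf C) := nf_complete C
      _ ≋ clist (sortT (nf C)) := clist_perm (sortT_perm _).symm
      _ = clist (sortT (nf A ++ splitConj x)) := by rw [hlist]
      _ ≋ clist (nf A ++ splitConj x) := clist_perm (sortT_perm _)
      _ ≋ .conj (clist (nf A)) (clist (splitConj x)) :=
        clist_append (nf_ne_nil A) (splitConj_ne_nil x)
      _ ≋ .conj A x := by
        rw [clist_splitConj]
        exact TyEq.conjCongr (nf_complete A).symm (TyEq.refl _)
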